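/- arXiv:0802.0865 — 2 statements merged into one kernel-verified Lean document; each statement's English description precedes it below -/
import Mathlib

section
/- In the logic G, for every n ≥ 1 and every type τ at which ∇-quantification is available, the formula ∃x₁…∃xₙ. ⋀_{1≤i<j≤n} xᵢ ≠ xⱼ is provable, where ≠ is the negation of the equality predicate defined by ∀x. x = x ≜ ⊤. -/
/-! A deep embedding of the logic G: first-order-style terms with eigenvariables
and nominal constants, formulas with de Bruijn quantifiers (∀, ∃, ∇), a natural
number predicate, stratified definitional clauses of the form
∀x⃗.(∇z⃗. p t⃗) ≜ B, and a height-indexed sequent calculus with the rules of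
Figures 1–3 of the paper (core rules, defL/defR, nat induction). -/

/-- Terms: de Bruijn variables (bound by quantifiers), eigenvariables,
nominal constants, ordinary constants, and application. -/
inductive Tm : Type
  | var : ℕ → Tm
  | evar : ℕ → Tm
  | nom : ℕ → Tm
  | cst : ℕ → Tm
  | app : Tm → Tm → Tm
  deriving DecidableEq

namespace Tm

/-- Support: nominal constants occurring in a term. -/
def supp : Tm → Finset ℕ
  | var _ => ∅ | evar _ => ∅ | nom a => {a} | cst _ => ∅
  | app m n => supp m ∪ supp n

/-- Eigenvariables occurring in a term. -/
def evars : Tm → Finset ℕ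
  | var _ => ∅ | evar h => {h} | nom _ => ∅ | cst _ => ∅
  | app m n => evars m ∪ evars n

/-- Free de Bruijn variables of a term. -/
def fvB : Tm → Finset ℕ
  | var k => {k} | evar _ => ∅ | nom _ => ∅ | cst _ => ∅
  | app m n => fvB m ∪ fvB n

/-- Substitute the (closed) term u for de Bruijn variable k. -/
def substV (k : ℕ) (u : Tm) : Tm → Tm
  | var n => if n = k then u else if k < n then var (n - 1) else var n
  | evar h => evar h | nom a => nom a | cst c => cst c
  | app m n => app (substV k u m) (substV k u n)

/-- Apply a substitution θ for eigenvariables. -/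
def substE (θ : ℕ → Tm) : Tm → Tm
  | var n => var n | evar h => θ h | nom a => nom a | cst c => cst c
  | app m n => app (substE θ m) (substE θ n)

/-- Rename nominal constants along ρ. -/
def renameNom (ρ : ℕ → ℕ) : Tm → Tm
  | var n => var n | evar h => evar h | nom a => nom (ρ a) | cst c => cst c
  | app m n => app (renameNom ρ m) (renameNom ρ n)

/-- Permute nominal constants. -/
def permN (π : Equiv.Perm ℕ) : Tm → Tm := renameNom π

/-- `appList t [c₁,…,cₙ]` is the application `t c₁ ⋯ cₙ` (used for raising). -/
def appList (t : Tm) (cs : List ℕ) : Tm :=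
  cs.foldl (fun acc a => Tm.app acc (Tm.nom a)) t

end Tm

/-- Formulas of G. -/
inductive Fm : Type
  | atom : ℕ → List Tm → Fm
  | top : Fm
  | bot : Fm
  | conj : Fm → Fm → Fm
  | disj : Fm → Fm → Fm
  | imp : Fm → Fm → Fm
  | all : Fm → Fm
  | ex : Fm → Fm
  | nab : Fm → Fm
  | natf : Tm → Fm
  deriving DecidableEq

namespace Fm

def supp : Fm → Finset ℕ
  | atom _ ts => ts.foldr (fun t s => t.supp ∪ s) ∅
  | top => ∅ | bot => ∅
  | conj B C => supp B ∪ supp C | disj B C => supp B ∪ supp C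
  | imp B C => supp B ∪ supp C
  | all B => supp B | ex B => supp B | nab B => supp B
  | natf t => t.supp

def evars : Fm → Finset ℕ
  | atom _ ts => ts.foldr (fun t s => t.evars ∪ s) ∅
  | top => ∅ | bot => ∅
  | conj B C => evars B ∪ evars C | disj B C => evars B ∪ evars C
  | imp B C => evars B ∪ evars C
  | all B => evars B | ex B => evars B | nab B => evars B
  | natf t => t.evars

def fvB : Fm → Finset ℕ
  | atom _ ts => ts.foldr (fun t s => t.fvB ∪ s) ∅
  | top => ∅ | bot => ∅
  | conj B C => fvB B ∪ fvB C | disj B C => fvB B ∪ fvB C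
  | imp B C => fvB B ∪ fvB C
  | all B => (fvB B).erase 0 |>.image (· - 1)
  | ex B => (fvB B).erase 0 |>.image (· - 1)
  | nab B => (fvB B).erase 0 |>.image (· - 1)
  | natf t => t.fvB

/-- Substitute a closed term u for de Bruijn variable k. -/
def substV (k : ℕ) (u : Tm) : Fm → Fm
  | atom p ts => atom p (ts.map (Tm.substV k u))
  | top => top | bot => bot
  | conj B C => conj (substV k u B) (substV k u C)
  | disj B C => disj (substV k u B) (substV k u C)
  | imp B C => imp (substV k u B) (substV k u C)
  | all B => all (substV (k+1) u B)
  | ex B => ex (substV (k+1) u B)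
  | nab B => nab (substV (k+1) u B)
  | natf t => natf (t.substV k u)

/-- Apply an eigenvariable substitution. -/
def substE (θ : ℕ → Tm) : Fm → Fm
  | atom p ts => atom p (ts.map (Tm.substE θ))
  | top => top | bot => bot
  | conj B C => conj (substE θ B) (substE θ C)
  | disj B C => disj (substE θ B) (substE θ C)
  | imp B C => imp (substE θ B) (substE θ C)
  | all B => all (substE θ B)
  | ex B => ex (substE θ B)
  | nab B => nab (substE θ B)
  | natf t => natf (t.substE θ)

def renameNom (ρ : ℕ → ℕ) : Fm → Fm
  | atom p ts => atom p (ts.map (Tm.renameNom ρ))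
  | top => top | bot => bot
  | conj B C => conj (renameNom ρ B) (renameNom ρ C)
  | disj B C => disj (renameNom ρ B) (renameNom ρ C)
  | imp B C => imp (renameNom ρ B) (renameNom ρ C)
  | all B => all (renameNom ρ B)
  | ex B => ex (renameNom ρ B)
  | nab B => nab (renameNom ρ B)
  | natf t => natf (t.renameNom ρ)

/-- Permute nominal constants in a formula. -/
def permN (π : Equiv.Perm ℕ) : Fm → Fm := renameNom π

/-- The level of a formula, given levels `pl` of predicates. -/
def lvl (pl : ℕ → ℕ) : Fm → ℕ
  | atom p _ => pl p
  | top => 0 | bot => 0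
  | conj B C => max (lvl pl B) (lvl pl C)
  | disj B C => max (lvl pl B) (lvl pl C)
  | imp B C => max (lvl pl B + 1) (lvl pl C)
  | all B => lvl pl B | ex B => lvl pl B | nab B => lvl pl B
  | natf _ => 0

end Fm

/-- A definitional clause ∀x⃗.(∇z⃗. p t⃗) ≜ B.  The ∇-bound variables z⃗ are
represented by the nominal constants 0,…,nab−1 (to be renamed to fresh nominal
constants on use); the ∀-bound variables x⃗ are the eigenvariables of the
clause. -/
structure Clause where
  pred : ℕ
  nab : ℕ
  args : List Tm
  body : Fm

namespace Clause

/-- The head of the instance of a clause obtained by renaming its ∇-variables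
with ρ and instantiating its ∀-variables with θ. -/
def instHead (c : Clause) (ρ : ℕ → ℕ) (θ : ℕ → Tm) : Fm :=
  Fm.atom c.pred (c.args.map fun t => (t.renameNom ρ).substE θ)

/-- The corresponding instance of the body. -/
def instBody (c : Clause) (ρ : ℕ → ℕ) (θ : ℕ → Tm) : Fm :=
  (c.body.renameNom ρ).substE θ

end Clause

/-- Well-formedness of a set of definitional clauses: stratified
(lvl(B) ≤ lvl(H)), no nominal constants besides the ∇-variables, and no
dangling de Bruijn variables. -/
structure GoodDefs (pl : ℕ → ℕ) (D : Set Clause) : Prop where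
  strat : ∀ c ∈ D, c.body.lvl pl ≤ pl c.pred
  headNoms : ∀ c ∈ D, ∀ t ∈ c.args, t.supp ⊆ Finset.range c.nab
  bodyNoms : ∀ c ∈ D, c.body.supp ⊆ Finset.range c.nab
  headClosed : ∀ c ∈ D, ∀ t ∈ c.args, t.fvB = ∅
  bodyClosed : ∀ c ∈ D, c.body.fvB = ∅

/-- Support of a context. -/
def ctxSupp (Γ : List Fm) : Finset ℕ := Γ.foldr (fun B s => B.supp ∪ s) ∅

/-- Eigenvariables of a context. -/
def ctxEvars (Γ : List Fm) : Finset ℕ := Γ.foldr (fun B s => B.evars ∪ s) ∅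

def zeroTm : Tm := Tm.cst 0
def succTm (t : Tm) : Tm := Tm.app (Tm.cst 1) t

/-- The sequent calculus for G, over a set of definitional clauses D.
`GSeq D cut h Γ C` means that Σ : Γ ⊢ C has a derivation of height (at most) h;
the `cut` flag records whether the cut rule may be used. -/
inductive GSeq (D : Set Clause) : Bool → ℕ → List Fm → Fm → Prop
  /-- initial rule: π.B = B' for some permutation of nominal constants -/
  | idr {b n Γ B C} (π : Equiv.Perm ℕ) (hfin : {x | π x ≠ x}.Finite)
      (hmem : B ∈ Γ) (hperm : B.permN π = C) : GSeq D b (n+1) Γ C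
  /-- cut -/
  | cut {n Γ Δ B C} : GSeq D true n Γ B → GSeq D true n (B :: Δ) C →
      GSeq D true (n+1) (Γ ++ Δ) C
  /-- contraction -/
  | contr {b n Γ B C} : GSeq D b n (B :: B :: Γ) C → GSeq D b (n+1) (B :: Γ) C
  /-- contexts are multisets: exchange preserves height -/
  | exch {b n Γ Γ' C} : Γ.Perm Γ' → GSeq D b n Γ C → GSeq D b n Γ' C
  | botL {b n Γ C} : GSeq D b (n+1) (Fm.bot :: Γ) C
  | topR {b n Γ} : GSeq D b (n+1) Γ Fm.top
  | conjL1 {b n Γ B₁ B₂ C} : GSeq D b n (B₁ :: Γ) C →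
      GSeq D b (n+1) (Fm.conj B₁ B₂ :: Γ) C
  | conjL2 {b n Γ B₁ B₂ C} : GSeq D b n (B₂ :: Γ) C →
      GSeq D b (n+1) (Fm.conj B₁ B₂ :: Γ) C
  | conjR {b n Γ B C} : GSeq D b n Γ B → GSeq D b n Γ C →
      GSeq D b (n+1) Γ (Fm.conj B C)
  | disjL {b n Γ B₁ B₂ C} : GSeq D b n (B₁ :: Γ) C → GSeq D b n (B₂ :: Γ) C →
      GSeq D b (n+1) (Fm.disj B₁ B₂ :: Γ) C
  | disjR1 {b n Γ B₁ B₂} : GSeq D b n Γ B₁ → GSeq D b (n+1) Γ (Fm.disj B₁ B₂)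
  | disjR2 {b n Γ B₁ B₂} : GSeq D b n Γ B₂ → GSeq D b (n+1) Γ (Fm.disj B₁ B₂)
  | impL {b n Γ B E C} : GSeq D b n Γ B → GSeq D b n (E :: Γ) C →
      GSeq D b (n+1) (Fm.imp B E :: Γ) C
  | impR {b n Γ B C} : GSeq D b n (B :: Γ) C → GSeq D b (n+1) Γ (Fm.imp B C)
  /-- ∀L: instantiate with any well-formed (closed) term -/
  | allL {b n Γ B C} (t : Tm) (ht : t.fvB = ∅) :
      GSeq D b n (B.substV 0 t :: Γ) C → GSeq D b (n+1) (Fm.all B :: Γ) C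
  /-- ∀R: raised over supp(B) with a fresh eigenvariable h -/
  | allR {b n Γ B} (h : ℕ) (cs : List ℕ)
      (hfresh : h ∉ ctxEvars Γ ∪ (Fm.all B).evars)
      (hcs : cs.toFinset = (Fm.all B).supp) (hnd : cs.Nodup) :
      GSeq D b n Γ (B.substV 0 (Tm.appList (Tm.evar h) cs)) →
      GSeq D b (n+1) Γ (Fm.all B)
  /-- ∃L: raised over supp(B) with a fresh eigenvariable h -/
  | exL {b n Γ B C} (h : ℕ) (cs : List ℕ)
      (hfresh : h ∉ ctxEvars Γ ∪ (Fm.ex B).evars ∪ C.evars)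
      (hcs : cs.toFinset = (Fm.ex B).supp) (hnd : cs.Nodup) :
      GSeq D b n (B.substV 0 (Tm.appList (Tm.evar h) cs) :: Γ) C →
      GSeq D b (n+1) (Fm.ex B :: Γ) C
  | exR {b n Γ B} (t : Tm) (ht : t.fvB = ∅) :
      GSeq D b n Γ (B.substV 0 t) → GSeq D b (n+1) Γ (Fm.ex B)
  /-- ∇L: use a nominal constant a ∉ supp(B) -/
  | nabL {b n Γ B C} (a : ℕ) (ha : a ∉ (Fm.nab B).supp) :
      GSeq D b n (B.substV 0 (Tm.nom a) :: Γ) C →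
      GSeq D b (n+1) (Fm.nab B :: Γ) C
  | nabR {b n Γ B} (a : ℕ) (ha : a ∉ (Fm.nab B).supp) :
      GSeq D b n Γ (B.substV 0 (Tm.nom a)) → GSeq D b (n+1) Γ (Fm.nab B)
  /-- defR: back-chain on a definitional clause, renaming its ∇-variables to
  fresh nominal constants ρ and instantiating its ∀-variables by θ, whose
  range may not contain the fresh nominal constants -/
  | defR {b n Γ} (c : Clause) (hc : c ∈ D) (ρ : ℕ → ℕ) (θ : ℕ → Tm)
      (hρinj : Set.InjOn ρ (Set.Iio c.nab))
      (hρfresh : ∀ i < c.nab, ρ i ∉ ctxSupp Γ ∪ (c.instHead ρ θ).supp \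
          ((Finset.range c.nab).image ρ))
      (hθ : ∀ v i, i < c.nab → ρ i ∉ (θ v).supp)
      (hθc : ∀ v, (θ v).fvB = ∅) :
      GSeq D b n Γ (c.instBody ρ θ) → GSeq D b (n+1) Γ (c.instHead ρ θ)
  /-- defL: case analysis on all clauses and all unifiers of the atom with
  (renamed, instantiated) clause heads; η instantiates the eigenvariables of
  the sequent, with nominal-constant-free range -/
  | defL {b n Γ C} (p : ℕ) (ts : List Tm)
      (prem : ∀ c ∈ D, ∀ ρ : ℕ → ℕ, ∀ θ η : ℕ → Tm,
        Set.InjOn ρ (Set.Iio c.nab) →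
        (∀ i < c.nab, ρ i ∉ ctxSupp (Fm.atom p ts :: Γ) ∪ C.supp) →
        (∀ v i, i < c.nab → ρ i ∉ (θ v).supp) →
        (∀ v, (θ v).fvB = ∅) →
        (∀ v, (η v).supp = ∅ ∧ (η v).fvB = ∅) →
        c.instHead ρ θ = (Fm.atom p ts).substE η →
        GSeq D b n (c.instBody ρ θ :: Γ.map (Fm.substE η)) (C.substE η)) :
      GSeq D b (n+1) (Fm.atom p ts :: Γ) C
  /-- natural number induction -/
  | natL {b n Γ C N} (I : Fm) (x : ℕ)
      (hx : x ∉ I.evars)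
      (hz : GSeq D b n [] (I.substV 0 zeroTm))
      (hs : GSeq D b n [I.substV 0 (Tm.evar x)] (I.substV 0 (succTm (Tm.evar x))))
      (hN : GSeq D b n (I.substV 0 N :: Γ) C) :
      GSeq D b (n+1) (Fm.natf N :: Γ) C
  | natRz {b n Γ} : GSeq D b (n+1) Γ (Fm.natf zeroTm)
  | natRs {b n Γ N} : GSeq D b n Γ (Fm.natf N) →
      GSeq D b (n+1) Γ (Fm.natf (succTm N))

/-- The equality predicate (predicate number 0), defined by the single clause
∀x. x = x ≜ ⊤. -/
def eqClause : Clause := ⟨0, 0, [Tm.evar 0, Tm.evar 0], Fm.top⟩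

/-- A definition consisting exactly of the equality clause. -/
def Deq : Set Clause := {eqClause}

/-- xᵢ ≠ xⱼ, i.e. (xᵢ = xⱼ) ⊃ ⊥, on de Bruijn variables i and j. -/
def neqFm (i j : ℕ) : Fm := Fm.imp (Fm.atom 0 [Tm.var i, Tm.var j]) Fm.bot

/-- All pairs (i,j) with i < j < n. -/
def allPairs (n : ℕ) : List (ℕ × ℕ) :=
  (List.range n).flatMap fun i =>
    (List.range n).filterMap fun j => if i < j then some (i, j) else none

/-- The conjunction ⋀_{i<j<n} xᵢ ≠ xⱼ. -/
def distinctBody (n : ℕ) : Fm :=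
  (allPairs n).foldr (fun p F => Fm.conj (neqFm p.1 p.2) F) Fm.top

/-- Iterated existential quantification ∃x₁…∃xₙ. -/
def exN : ℕ → Fm → Fm
  | 0, F => F
  | k + 1, F => Fm.ex (exN k F)

/-! ### Auxiliary material for the proof -/

/-- Term to use for variable `i` when the outermost `n - k` existentials have
been instantiated by nominal constants. -/
def tmOf (k i : ℕ) : Tm := if i < k then Tm.var i else Tm.nom i

/-- Conjunction of disequations with the first `n - k` variables replaced by
nominal constants. -/
def bodyK (n k : ℕ) : Fm :=
  (allPairs n).foldr
    (fun p F => Fm.conj (Fm.imp (Fm.atom 0 [tmOf k p.1, tmOf k p.2]) Fm.bot) F)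
    Fm.top

lemma mem_allPairs {n : ℕ} {p : ℕ × ℕ} (hp : p ∈ allPairs n) :
    p.1 < p.2 ∧ p.2 < n := by
  simp only [allPairs, List.mem_flatMap, List.mem_filterMap, List.mem_range] at hp
  obtain ⟨i, hi, j, hj, hij⟩ := hp
  split at hij
  · cases hij; exact ⟨by assumption, hj⟩
  · cases hij

lemma substV_exN (k : ℕ) : ∀ (j : ℕ) (t : Tm) (B : Fm),
    (exN k B).substV j t = exN k (B.substV (j + k) t) := by
  induction k with
  | zero => intro j t B; simp [exN]
  | succ k ih =>
    intro j t B
    show Fm.ex ((exN k B).substV (j+1) t) = Fm.ex (exN k (B.substV (j+(k+1)) t))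
    rw [ih]
    have h : j + 1 + k = j + (k+1) := by omega
    rw [h]

lemma tmOf_subst (k i : ℕ) : Tm.substV k (Tm.nom k) (tmOf (k+1) i) = tmOf k i := by
  unfold tmOf
  by_cases h1 : i < k + 1
  · rw [if_pos h1]
    show (if i = k then Tm.nom k else if k < i then Tm.var (i-1) else Tm.var i) = _
    by_cases h2 : i = k
    · subst h2; simp
    · have h3 : i < k := by omega
      rw [if_neg h2, if_neg (by omega), if_pos h3]
  · rw [if_neg h1]
    show Tm.nom i = _
    rw [if_neg (by omega)]

lemma bodyK_subst (n k : ℕ) :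
    (bodyK n (k+1)).substV k (Tm.nom k) = bodyK n k := by
  unfold bodyK
  induction allPairs n with
  | nil => simp [Fm.substV]
  | cons p l ih =>
    simp only [List.foldr_cons, Fm.substV, List.map, ih, tmOf_subst]

lemma distinctBody_eq_bodyK (n : ℕ) : distinctBody n = bodyK n n := by
  unfold distinctBody bodyK
  have : ∀ l : List (ℕ × ℕ), (∀ p ∈ l, p.1 < n ∧ p.2 < n) →
      l.foldr (fun p F => Fm.conj (neqFm p.1 p.2) F) Fm.top
        = l.foldr (fun p F =>
            Fm.conj (Fm.imp (Fm.atom 0 [tmOf n p.1, tmOf n p.2]) Fm.bot) F) Fm.top := by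
    intro l hl
    induction l with
    | nil => rfl
    | cons p l ih =>
      have hp := hl p (by simp)
      simp only [List.foldr_cons, ih (fun q hq => hl q (by simp [hq]))]
      congr 1
      simp [neqFm, tmOf, hp.1, hp.2]
  refine this _ ?_
  intro p hp
  have := mem_allPairs hp
  exact ⟨lt_trans this.1 this.2, this.2⟩

/-- Distinct nominal constants are provably unequal. -/
lemma noms_neq (a b : ℕ) (hab : a ≠ b) (m : ℕ) :
    GSeq Deq false (m + 2) [] (Fm.imp (Fm.atom 0 [Tm.nom a, Tm.nom b]) Fm.bot) := by
  apply GSeq.impR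
  apply GSeq.defL 0 [Tm.nom a, Tm.nom b]
  intro c hc ρ θ η _ _ _ _ _ heq
  have hceq : c = eqClause := hc
  subst hceq
  simp only [Clause.instHead, eqClause, List.map, Tm.renameNom, Tm.substE,
    Fm.substE, Fm.atom.injEq, List.cons.injEq] at heq
  obtain ⟨-, h1, h2, -⟩ := heq
  rw [h1] at h2
  exact absurd (Tm.nom.inj h2) hab

/-- The fully instantiated body is provable (at suitable heights). -/
lemma bodyK_zero_provable (n hh : ℕ) :
    GSeq Deq false (hh + (allPairs n).length + 2) [] (bodyK n 0) := by
  unfold bodyK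
  have key : ∀ l : List (ℕ × ℕ), (∀ p ∈ l, p.1 ≠ p.2) → ∀ h : ℕ,
      GSeq Deq false (h + l.length + 2) []
        (l.foldr (fun p F =>
          Fm.conj (Fm.imp (Fm.atom 0 [tmOf 0 p.1, tmOf 0 p.2]) Fm.bot) F) Fm.top) := by
    intro l hl
    induction l with
    | nil => intro h; exact GSeq.topR
    | cons p l ih =>
      intro h
      have hlen : h + (p :: l).length + 2 = (h + l.length + 2) + 1 := by
        simp [List.length_cons]; omega
      rw [hlen]
      apply GSeq.conjR
      · have := noms_neq p.1 p.2 (hl p (by simp)) (h + l.length)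
        simpa [tmOf] using this
      · exact ih (fun q hq => hl q (by simp [hq])) h
  refine key _ ?_ hh
  intro p hp
  exact Nat.ne_of_lt (mem_allPairs hp).1

lemma exN_provable (n : ℕ) : ∀ k, k ≤ n →
    GSeq Deq false ((allPairs n).length + 2 + k) [] (exN k (bodyK n k)) := by
  intro k
  induction k with
  | zero =>
    intro _
    simpa [exN] using bodyK_zero_provable n 0
  | succ k ih =>
    intro hk
    show GSeq Deq false (((allPairs n).length + 2 + k) + 1) []
      (Fm.ex (exN k (bodyK n (k+1))))
    apply GSeq.exR (Tm.nom k) rfl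
    rw [substV_exN, Nat.zero_add, bodyK_subst]
    exact ih (by omega)

/-- for every n ≥ 1, the formula
∃x₁…∃xₙ. ⋀_{1≤i<j≤n} xᵢ ≠ xⱼ is provable in G with equality defined by
∀x. x = x ≜ ⊤, since distinct nominal constants are provably unequal. -/

theorem exists_n_distinct (n : ℕ) (hn : 1 ≤ n) :
    ∃ m, GSeq Deq false m [] (exN n (distinctBody n)) := by
  refine ⟨(allPairs n).length + 2 + n, ?_⟩
  rw [distinctBody_eq_bodyK]
  exact exN_provable n n le_rfl
end

section
/- In the logic G with fresh defined by the clause ∀E.(∇x. fresh x E) ≜ ⊤, the judgment fresh N T is provable if and only if N is a nominal constant and N does not occur in (the support of) T. -/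
/-- The predicate `fresh` (predicate number 0), defined by the single clause
∀E.(∇x. fresh x E) ≜ ⊤; the ∇-bound variable x is represented by the
nominal constant 0 of the clause, the ∀-bound variable E by eigenvariable 0. -/
def freshClause : Clause := ⟨0, 1, [Tm.nom 0, Tm.evar 0], Fm.top⟩

/-- A definition consisting exactly of the freshness clause. -/
def Dfresh : Set Clause := {freshClause}


private theorem fresh_fwd {b : Bool} {n : ℕ} {Γ : List Fm} {C : Fm}
    (h : GSeq Dfresh b n Γ C) : b = false → Γ = [] →
    ∀ N T, C = Fm.atom 0 [N, T] → ∃ a, N = Tm.nom a ∧ a ∉ T.supp := by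
  induction h with
  | idr π hfin hmem hperm =>
      intro _ hΓ; subst hΓ; simp at hmem
  | cut _ _ _ _ => intro hb; simp at hb
  | contr _ _ => intro _ hΓ; simp at hΓ
  | exch hperm _ ih =>
      intro hb hΓ; subst hΓ
      exact ih hb (List.perm_nil.mp hperm)
  | botL => intro _ hΓ; simp at hΓ
  | topR => intro _ _ N T hC; simp at hC
  | conjL1 _ _ => intro _ hΓ; simp at hΓ
  | conjL2 _ _ => intro _ hΓ; simp at hΓ
  | conjR _ _ _ _ => intro _ _ N T hC; simp at hC
  | disjL _ _ _ _ => intro _ hΓ; simp at hΓ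
  | disjR1 _ _ => intro _ _ N T hC; simp at hC
  | disjR2 _ _ => intro _ _ N T hC; simp at hC
  | impL _ _ _ _ => intro _ hΓ; simp at hΓ
  | impR _ _ => intro _ _ N T hC; simp at hC
  | allL t ht _ _ => intro _ hΓ; simp at hΓ
  | allR h' cs hfresh hcs hnd _ _ => intro _ _ N T hC; simp at hC
  | exL h' cs hfresh hcs hnd _ _ => intro _ hΓ; simp at hΓ
  | exR t ht _ _ => intro _ _ N T hC; simp at hC
  | nabL a ha _ _ => intro _ hΓ; simp at hΓ
  | nabR a ha _ _ => intro _ _ N T hC; simp at hC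
  | defR c hc ρ θ hρinj hρfresh hθ hθc _ _ =>
      intro _ _ N T hC
      have hcF : c = freshClause := by
        simpa [Dfresh] using hc
      subst hcF
      simp [Clause.instHead, freshClause, Tm.renameNom, Tm.substE] at hC
      obtain ⟨h1, h2⟩ := hC
      refine ⟨ρ 0, h1.symm, ?_⟩
      have := hθ 0 0 (by norm_num [freshClause])
      rwa [h2] at this
  | defL p ts prem => intro _ hΓ; simp at hΓ
  | natL I x hx hz hs hN _ _ _ => intro _ hΓ; simp at hΓ
  | natRz => intro _ _ N T hC; simp at hC
  | natRs _ _ => intro _ _ N T hC; simp at hC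

/-- for ground terms N and T, the judgment `fresh N T` is
provable in G iff N is a nominal constant that does not occur in the support
of T. -/
theorem fresh_characterization (N T : Tm)
    (hNv : N.fvB = ∅) (hTv : T.fvB = ∅) (hNe : N.evars = ∅) (hTe : T.evars = ∅) :
    (∃ n, GSeq Dfresh false n [] (Fm.atom 0 [N, T])) ↔
      (∃ a, N = Tm.nom a ∧ a ∉ T.supp) := by
  constructor
  · rintro ⟨n, h⟩
    exact fresh_fwd h rfl rfl N T rfl
  · rintro ⟨a, rfl, ha⟩
    refine ⟨2, ?_⟩
    have hhead : (freshClause.instHead (fun _ => a) (fun _ => T)) =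
        Fm.atom 0 [Tm.nom a, T] := by
      simp [Clause.instHead, freshClause, Tm.renameNom, Tm.substE]
    have hbody : (freshClause.instBody (fun _ => a) (fun _ => T)) = Fm.top := by
      simp [Clause.instBody, freshClause, Fm.renameNom, Fm.substE]
    rw [← hhead]
    refine GSeq.defR freshClause (by simp [Dfresh]) (fun _ => a) (fun _ => T)
      ?_ ?_ ?_ ?_ ?_
    · intro x hx y hy _; simp [freshClause] at hx hy; omega
    · intro i hi
      simp [freshClause] at hi; subst hi
      simp [ctxSupp, hhead, Fm.supp, Tm.supp, freshClause]
    · intro v i hi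
      simp [freshClause] at hi; subst hi; exact ha
    · intro v; exact hTv
    · rw [hbody]; exact GSeq.topR
end
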